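/- For every configuration x = (x_1,…,x_n) of n distinct points in ℝ², there is a unique minimal pair (t,p) ∈ T_n with x ∈ I_n(t,p): namely, t is the lexicographic order (i < j in t iff x_i < x_j lexicographically) and p is defined by i < j in p iff π_1(x_i) = π_1(x_j) and π_2(x_i) < π_2(x_j). Moreover this (t,p) satisfies the consistency condition defining T_n. -/
import Mathlib


/-- An element of `T_n`: a pair `(t, p)` of a strict total order `t` and a strict
partial order `p` on `{1,…,n}` with `p ⊆ t` and the betweenness condition. -/
structure TPair (n : ℕ) where
  t : Fin n → Fin n → Prop
  p : Fin n → Fin n → Prop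
  t_irrefl : ∀ i, ¬ t i i
  t_trans : ∀ i j k, t i j → t j k → t i k
  t_total : ∀ i j, i ≠ j → t i j ∨ t j i
  p_irrefl : ∀ i, ¬ p i i
  p_trans : ∀ i j k, p i j → p j k → p i k
  sub : ∀ i j, p i j → t i j
  between : ∀ i j k, t i j → t j k → p i k → p i j

/-- The partial order on `T_n`. -/
def TPair.le {n : ℕ} (a b : TPair n) : Prop :=
  (∀ i j, a.p i j → b.p i j) ∧ (∀ i j, b.t i j → a.t j i → b.p i j)

/-- Membership of a configuration `x` in `I_n(t,p)`. -/
def memI {n : ℕ} (x : Fin n → ℝ × ℝ) (a : TPair n) : Prop :=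
  (∀ i j, a.t i j → (x j).1 ≤ (x i).1 → a.p i j) ∧
  (∀ i j, a.t i j → (x i).1 = (x j).1 → a.p i j ∧ (x i).2 < (x j).2)

/-- The lexicographic total order determined by a configuration. -/
def lexT {n : ℕ} (x : Fin n → ℝ × ℝ) (i j : Fin n) : Prop :=
  (x i).1 < (x j).1 ∨ ((x i).1 = (x j).1 ∧ (x i).2 < (x j).2)

/-- The vertical partial order determined by a configuration. -/
def vertP {n : ℕ} (x : Fin n → ℝ × ℝ) (i j : Fin n) : Prop :=
  (x i).1 = (x j).1 ∧ (x i).2 < (x j).2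

lemma lexT_irrefl {n : ℕ} (x : Fin n → ℝ × ℝ) (i : Fin n) : ¬ lexT x i i := by
  rintro (h | ⟨_, h⟩) <;> exact lt_irrefl _ h

lemma lexT_trans {n : ℕ} (x : Fin n → ℝ × ℝ) (i j k : Fin n) :
    lexT x i j → lexT x j k → lexT x i k := by
  rintro (h | ⟨h1, h2⟩) (h' | ⟨h1', h2'⟩)
  · exact Or.inl (h.trans h')
  · exact Or.inl (h1' ▸ h)
  · exact Or.inl (h1 ▸ h')
  · exact Or.inr ⟨h1.trans h1', h2.trans h2'⟩

lemma lexT_total {n : ℕ} (x : Fin n → ℝ × ℝ) (hx : Function.Injective x) (i j : Fin n)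
    (hij : i ≠ j) : lexT x i j ∨ lexT x j i := by
  rcases lt_trichotomy (x i).1 (x j).1 with h | h | h
  · exact Or.inl (Or.inl h)
  · rcases lt_trichotomy (x i).2 (x j).2 with h2 | h2 | h2
    · exact Or.inl (Or.inr ⟨h, h2⟩)
    · exact absurd (hx (Prod.ext h h2)) hij
    · exact Or.inr (Or.inr ⟨h.symm, h2⟩)
  · exact Or.inr (Or.inl h)

lemma lexT_asymm {n : ℕ} (x : Fin n → ℝ × ℝ) (i j : Fin n) :
    lexT x i j → lexT x j i → False := fun h h' =>
  lexT_irrefl x i (lexT_trans x i j i h h')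


def lexPair {n : ℕ} (x : Fin n → ℝ × ℝ) (hx : Function.Injective x) : TPair n where
  t := lexT x
  p := vertP x
  t_irrefl := lexT_irrefl x
  t_trans := lexT_trans x
  t_total := lexT_total x hx
  p_irrefl := fun i ⟨_, h⟩ => lt_irrefl _ h
  p_trans := fun i j k ⟨h1, h2⟩ ⟨h1', h2'⟩ => ⟨h1.trans h1', h2.trans h2'⟩
  sub := fun i j h => Or.inr h
  between := by
    rintro i j k hij hjk ⟨hxk, _⟩
    have h1 : (x i).1 ≤ (x j).1 := by
      rcases hij with h | ⟨h, _⟩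
      · exact h.le
      · exact h.le
    have h2 : (x j).1 ≤ (x k).1 := by
      rcases hjk with h | ⟨h, _⟩
      · exact h.le
      · exact h.le
    have heq : (x i).1 = (x j).1 := le_antisymm h1 (hxk ▸ h2)
    rcases hij with h | ⟨_, hy⟩
    · exact absurd heq h.ne
    · exact ⟨heq, hy⟩

lemma lexPair_mem {n : ℕ} (x : Fin n → ℝ × ℝ) (hx : Function.Injective x) :
    memI x (lexPair x hx) := by
  constructor
  · rintro i j (h | ⟨h, hy⟩) hle
    · exact absurd hle (not_le.mpr h)
    · exact ⟨h, hy⟩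
  · rintro i j (h | ⟨h, hy⟩) heq
    · exact absurd heq h.ne
    · exact ⟨⟨h, hy⟩, hy⟩

lemma lexPair_le {n : ℕ} (x : Fin n → ℝ × ℝ) (hx : Function.Injective x)
    (b : TPair n) (hb : memI x b) : TPair.le (lexPair x hx) b := by
  obtain ⟨hb1, hb2⟩ := hb
  refine ⟨fun i j ⟨hxeq, hy⟩ => ?_, fun i j hbt hlex => ?_⟩
  · have hij : i ≠ j := fun h => lt_irrefl _ (h ▸ hy)
    rcases b.t_total i j hij with ht | ht
    · exact (hb2 i j ht hxeq).1
    · exact absurd (hb2 j i ht hxeq.symm).2 (not_lt.mpr hy.le)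
  · have : (x j).1 ≤ (x i).1 := by
      rcases hlex with h | ⟨h, _⟩
      · exact h.le
      · exact h.le
    exact hb1 i j hbt this

/-- For every configuration `x` of `n` distinct points in `ℝ²` there is a unique
minimal pair `(t,p) ∈ T_n` with `x ∈ I_n(t,p)`: namely the lexicographic order `t`
and the vertical order `p`.  Moreover this pair satisfies the consistency conditions
defining `T_n`. -/
theorem unique_minimal_pair {n : ℕ} (x : Fin n → ℝ × ℝ) (hx : Function.Injective x) :
    ∃ a : TPair n,
      a.t = lexT x ∧ a.p = vertP x ∧
      memI x a ∧
      (∀ b : TPair n, memI x b → TPair.le a b) ∧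
      (∀ b : TPair n, memI x b → (∀ c : TPair n, memI x c → TPair.le b c) →
        ∀ i j, (b.t i j ↔ a.t i j) ∧ (b.p i j ↔ a.p i j)) := by
  refine ⟨lexPair x hx, rfl, rfl, lexPair_mem x hx, lexPair_le x hx, ?_⟩
  intro b hbmem hbmin i j
  have hab := lexPair_le x hx b hbmem
  obtain ⟨hba1, hba2⟩ := hbmin (lexPair x hx) (lexPair_mem x hx)
  have hp : ∀ i j, b.p i j ↔ vertP x i j := fun i j =>
    ⟨fun h => hba1 i j h, fun h => hab.1 i j h⟩
  refine ⟨⟨fun hbt => ?_, fun hlex => ?_⟩, hp i j⟩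
  · by_contra hnl
    have hij : i ≠ j := fun h => b.t_irrefl i (h ▸ hbt)
    rcases lexT_total x hx i j hij with h | h
    · exact hnl h
    · exact hnl (Or.inr ((hp i j).mp (hab.2 i j hbt h)))
  · by_contra hnbt
    have hij : i ≠ j := fun h => lexT_irrefl x i (h ▸ hlex)
    rcases b.t_total i j hij with h | h
    · exact hnbt h
    · have hv : vertP x i j := hba2 i j hlex h
      have : b.t i j := b.sub i j ((hp i j).mpr hv)
      exact b.t_irrefl i (b.t_trans i j i this h)
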